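/- Let T : C → C be k-strictly pseudocontractive with Fix(T) ≠ ∅, and let {α_n} ⊆ (k, 1) satisfy Σ_n (α_n − k)(1 − α_n) = ∞. Then the Mann iteration x_{n+1} = α_n x_n + (1 − α_n) T x_n converges weakly to a fixed point of T. -/

import Mathlib

open Filter
open scoped RealInnerProductSpace Topology

private lemma norm_combo_sq' {H : Type*} [NormedAddCommGroup H] [InnerProductSpace ℝ H]
    (a b : H) (β : ℝ) :
    ‖(1 - β) • a + β • b‖ ^ 2
      = (1 - β) * ‖a‖ ^ 2 + β * ‖b‖ ^ 2 - β * (1 - β) * ‖a - b‖ ^ 2 := by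
  have h1 : (1 - β) • a + β • b = a + β • (b - a) := by module
  have e1 : ‖a + β • (b - a)‖ ^ 2 = ‖a‖ ^ 2 + 2 * (β * ⟪a, b - a⟫) + β ^ 2 * ‖b - a‖ ^ 2 := by
    rw [norm_add_sq_real, real_inner_smul_right, norm_smul, Real.norm_eq_abs, mul_pow, sq_abs]
  have e2 : ‖b‖ ^ 2 = ‖a‖ ^ 2 + 2 * ⟪a, b - a⟫ + ‖b - a‖ ^ 2 := by
    have h2 : b = a + (b - a) := by abel
    conv_lhs => rw [h2]
    rw [norm_add_sq_real]
  have e3 : ‖a - b‖ = ‖b - a‖ := norm_sub_rev _ _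
  rw [h1, e1, e3, e2]; ring


private lemma ultra_lim_of_bounded (U : Ultrafilter ℕ) (s : ℕ → ℝ) {M : ℝ}
    (h : ∀ n, |s n| ≤ M) : ∃ c, Tendsto s (↑U) (𝓝 c) := by
  have hs : ∀ n, s n ∈ Set.Icc (-M) M := fun n => abs_le.mp (h n)
  obtain ⟨c, -, hcl⟩ := (isCompact_Icc (a := -M) (b := M)).ultrafilter_le_nhds (U.map s)
    (by rw [le_principal_iff, Ultrafilter.coe_map, mem_map]
        exact Filter.univ_mem' hs)
  exact ⟨c, hcl⟩

private lemma weak_ultra_limit' {H : Type*} [NormedAddCommGroup H] [InnerProductSpace ℝ H]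
    [CompleteSpace H]
    (C : Set H) (hCc : IsClosed C) (hC : Convex ℝ C)
    (S : H → H)
    (hSne : ∀ x ∈ C, ∀ y ∈ C, ‖S x - S y‖ ≤ ‖x - y‖)
    (x : ℕ → H) (hxC : ∀ n, x n ∈ C)
    (M : ℝ) (hM : ∀ n, ‖x n‖ ≤ M)
    (hd : Tendsto (fun n => ‖x n - S (x n)‖) atTop (𝓝 0))
    (U : Ultrafilter ℕ) (hU : ↑U ≤ (atTop : Filter ℕ)) :
    ∃ q ∈ C, S q = q ∧ ∀ w : H, Tendsto (fun n => ⟪x n, w⟫) (↑U) (𝓝 ⟪q, w⟫) := by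
  have hex : ∀ w : H, ∃ c, Tendsto (fun n => ⟪x n, w⟫) (↑U) (𝓝 c) := by
    intro w
    apply ultra_lim_of_bounded U _ (M := M * ‖w‖)
    intro n
    calc |⟪x n, w⟫| ≤ ‖x n‖ * ‖w‖ := abs_real_inner_le_norm _ _
      _ ≤ M * ‖w‖ := mul_le_mul_of_nonneg_right (hM n) (norm_nonneg w)
  choose g hg using hex
  have hadd : ∀ w w', g (w + w') = g w + g w' := fun w w' =>
    tendsto_nhds_unique (hg (w + w'))
      (by simpa [inner_add_right] using (hg w).add (hg w'))
  have hsmul : ∀ (c : ℝ) w, g (c • w) = c * g w := fun c w =>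
    tendsto_nhds_unique (hg (c • w))
      (by simpa [real_inner_smul_right] using (hg w).const_mul c)
  let lin : H →ₗ[ℝ] ℝ :=
    { toFun := g
      map_add' := hadd
      map_smul' := by intro c w; simpa using hsmul c w }
  have hbound : ∀ w, ‖lin w‖ ≤ M * ‖w‖ := by
    intro w
    rw [Real.norm_eq_abs]
    refine le_of_tendsto (hg w).abs (Eventually.of_forall fun n => ?_)
    calc |⟪x n, w⟫| ≤ ‖x n‖ * ‖w‖ := abs_real_inner_le_norm _ _
      _ ≤ M * ‖w‖ := mul_le_mul_of_nonneg_right (hM n) (norm_nonneg w)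
  let φ : H →L[ℝ] ℝ := LinearMap.mkContinuous lin M hbound
  set q := (InnerProductSpace.toDual ℝ H).symm φ with hqdef
  have hqw : ∀ w, ⟪q, w⟫ = g w := fun w => InnerProductSpace.toDual_symm_apply
  have hglim : ∀ w, Tendsto (fun n => ⟪x n, w⟫) (↑U) (𝓝 ⟪q, w⟫) := by
    intro w; rw [hqw w]; exact hg w
  -- q ∈ C
  have hCne : C.Nonempty := ⟨x 0, hxC 0⟩
  have hqC : q ∈ C := by
    obtain ⟨v, hvC, hv⟩ := exists_norm_eq_iInf_of_complete_convex hCne hCc.isComplete hC q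
    have hchar := (norm_eq_iInf_iff_real_inner_le_zero hC hvC).mp hv
    have hexp : ∀ n, ⟪q - v, x n - v⟫ = ⟪x n, q - v⟫ - ⟪v, q - v⟫ := by
      intro n
      rw [inner_sub_right, real_inner_comm (q - v) (x n), real_inner_comm (q - v) v]
    have hlim2 : Tendsto (fun n => ⟪q - v, x n - v⟫) (↑U) (𝓝 (‖q - v‖ ^ 2)) := by
      have h1 : Tendsto (fun n => ⟪x n, q - v⟫ - ⟪v, q - v⟫) (↑U)
          (𝓝 (⟪q, q - v⟫ - ⟪v, q - v⟫)) := (hglim (q - v)).sub_const _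
      have h2 : ⟪q, q - v⟫ - ⟪v, q - v⟫ = ‖q - v‖ ^ 2 := by
        rw [← inner_sub_left, real_inner_self_eq_norm_sq]
      rw [← h2]
      simpa only [hexp] using h1
    have hle : ‖q - v‖ ^ 2 ≤ 0 :=
      le_of_tendsto hlim2 (Eventually.of_forall fun n => hchar _ (hxC n))
    have : q - v = 0 := by
      have := norm_nonneg (q - v)
      have hn : ‖q - v‖ = 0 := by nlinarith
      exact norm_eq_zero.mp hn
    rw [sub_eq_zero] at this
    rw [this]; exact hvC
  -- S q = q
  have hSq : S q = q := by
    set u := q - S q with hudef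
    set B := M + ‖q‖ with hBdef
    have hineq : ∀ n, 2 * (⟪x n, u⟫ - ⟪q, u⟫) + ‖u‖ ^ 2 ≤
        ‖x n - S (x n)‖ ^ 2 + 2 * ‖x n - S (x n)‖ * B := by
      intro n
      have h1 : ‖x n - S q‖ ≤ ‖x n - S (x n)‖ + ‖x n - q‖ := by
        have t1 : x n - S q = (x n - S (x n)) + (S (x n) - S q) := by abel
        calc ‖x n - S q‖ ≤ ‖x n - S (x n)‖ + ‖S (x n) - S q‖ := by
              rw [t1]; exact norm_add_le _ _
          _ ≤ ‖x n - S (x n)‖ + ‖x n - q‖ := by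
              have := hSne (x n) (hxC n) q hqC; linarith
      have h2 : ‖x n - S q‖ ^ 2 = ‖x n - q‖ ^ 2 + 2 * ⟪x n - q, u⟫ + ‖u‖ ^ 2 := by
        have t2 : x n - S q = (x n - q) + u := by rw [hudef]; abel
        rw [t2, norm_add_sq_real]
      have h3 : ‖x n - S q‖ ^ 2 ≤ (‖x n - S (x n)‖ + ‖x n - q‖) ^ 2 :=
        pow_le_pow_left₀ (norm_nonneg _) h1 2
      have h4 : ‖x n - q‖ ≤ B := by
        calc ‖x n - q‖ ≤ ‖x n‖ + ‖q‖ := norm_sub_le _ _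
          _ ≤ B := by rw [hBdef]; linarith [hM n]
      have h5 : ⟪x n - q, u⟫ = ⟪x n, u⟫ - ⟪q, u⟫ := inner_sub_left _ _ _
      have h6 : (0:ℝ) ≤ ‖x n - S (x n)‖ := norm_nonneg _
      have h7 : (0:ℝ) ≤ ‖x n - q‖ := norm_nonneg _
      nlinarith [h2, h3, h4, h5, h6, h7]
    have hL : Tendsto (fun n => 2 * (⟪x n, u⟫ - ⟪q, u⟫) + ‖u‖ ^ 2) (↑U)
        (𝓝 (‖u‖ ^ 2)) := by
      have := (((hglim u).sub_const ⟪q, u⟫).const_mul 2).add_const (‖u‖ ^ 2)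
      simpa using this
    have hR : Tendsto (fun n => ‖x n - S (x n)‖ ^ 2 + 2 * ‖x n - S (x n)‖ * B) (↑U)
        (𝓝 0) := by
      have hd' : Tendsto (fun n => ‖x n - S (x n)‖) (↑U) (𝓝 0) := hd.mono_left hU
      have := ((hd'.pow 2).add ((hd'.const_mul 2).mul_const B))
      simpa using this
    have hle : ‖u‖ ^ 2 ≤ 0 := le_of_tendsto_of_tendsto' hL hR hineq
    have hu0 : u = 0 := by
      have := norm_nonneg u
      have hn : ‖u‖ = 0 := by nlinarith
      exact norm_eq_zero.mp hn
    rw [hudef, sub_eq_zero] at hu0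
    exact hu0.symm
  exact ⟨q, hqC, hSq, hglim⟩

set_option maxHeartbeats 1000000 in
theorem mann_weak_convergence_strict_pseudocontraction
    {H : Type*} [NormedAddCommGroup H] [InnerProductSpace ℝ H] [CompleteSpace H]
    (C : Set H) (hCb : Bornology.IsBounded C) (hCc : IsClosed C) (hC : Convex ℝ C)
    (T : H → H) (hT : Set.MapsTo T C C)
    (k : ℝ) (hk0 : 0 ≤ k) (hk1 : k < 1)
    (hspc : ∀ x ∈ C, ∀ y ∈ C,
      ‖T x - T y‖ ^ 2 ≤ ‖x - y‖ ^ 2 + k * ‖x - y - (T x - T y)‖ ^ 2)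
    (hfix : ∃ p ∈ C, T p = p)
    (α : ℕ → ℝ) (hα : ∀ n, k < α n ∧ α n < 1)
    (hdiv : Tendsto (fun N => ∑ n ∈ Finset.range N, (α n - k) * (1 - α n)) atTop atTop)
    (x : ℕ → H) (hx0 : x 0 ∈ C)
    (hit : ∀ n, x (n + 1) = α n • x n + (1 - α n) • T (x n)) :
    ∃ q ∈ C, T q = q ∧
      ∀ w : H, Tendsto (fun n => ⟪x n, w⟫) atTop (𝓝 ⟪q, w⟫) := by
  obtain ⟨p, hpC, hpT⟩ := hfix
  obtain ⟨M₀, hM₀⟩ := hCb.exists_norm_le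
  set M := max M₀ 0 with hMdef
  have hMC : ∀ y ∈ C, ‖y‖ ≤ M := fun y hy => le_trans (hM₀ y hy) (le_max_left _ _)
  have hk1' : (0:ℝ) < 1 - k := by linarith
  have hkne : (1:ℝ) - k ≠ 0 := hk1'.ne'
  set S : H → H := fun y => k • y + (1 - k) • T y with hSdef
  have hSC : Set.MapsTo S C C := fun y hy => hC hy (hT hy) hk0 hk1'.le (by ring)
  have hSne : ∀ y ∈ C, ∀ z ∈ C, ‖S y - S z‖ ≤ ‖y - z‖ := by
    intro y hy z hz
    have h2 : S y - S z = (1 - (1 - k)) • (y - z) + (1 - k) • (T y - T z) := by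
      simp only [hSdef]; module
    have h3 : ‖S y - S z‖ ^ 2 = k * ‖y - z‖ ^ 2 + (1 - k) * ‖T y - T z‖ ^ 2
        - (1 - k) * k * ‖(y - z) - (T y - T z)‖ ^ 2 := by
      rw [h2, norm_combo_sq']; ring
    have h4 := hspc y hy z hz
    have h5 : ‖S y - S z‖ ^ 2 ≤ ‖y - z‖ ^ 2 := by
      nlinarith [mul_le_mul_of_nonneg_left h4 hk1'.le]
    have := Real.sqrt_le_sqrt h5
    rwa [Real.sqrt_sq (norm_nonneg _), Real.sqrt_sq (norm_nonneg _)] at this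
  set β : ℕ → ℝ := fun n => (1 - α n) / (1 - k) with hβdef
  have hβ0 : ∀ n, 0 < β n := fun n => div_pos (by linarith [(hα n).2]) hk1'
  have hβ1 : ∀ n, β n < 1 := fun n => (div_lt_one hk1').mpr (by linarith [(hα n).1])
  have hitS : ∀ n, x (n + 1) = (1 - β n) • x n + β n • S (x n) := by
    intro n
    rw [hit n]
    simp only [hSdef, hβdef]
    match_scalars
    · field_simp; ring
    · field_simp
  have hxC : ∀ n, x n ∈ C := by
    intro n; induction n with
    | zero => exact hx0
    | succ n ih =>
      rw [hitS n]
      exact hC ih (hSC ih) (by linarith [hβ1 n]) (hβ0 n).le (by ring)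
  set d : ℕ → ℝ := fun n => ‖x n - S (x n)‖ with hddef
  have hd0 : ∀ n, 0 ≤ d n := fun n => norm_nonneg _
  have hdmono : ∀ n, d (n + 1) ≤ d n := by
    intro n
    have h1 : ‖x (n + 1) - S (x n)‖ = (1 - β n) * d n := by
      have e : x (n + 1) - S (x n) = (1 - β n) • (x n - S (x n)) := by
        rw [hitS n]; module
      rw [hddef]
      rw [e, norm_smul, Real.norm_eq_abs, abs_of_nonneg (by linarith [hβ1 n])]
    have h2 : ‖x (n + 1) - x n‖ = β n * d n := by
      have e : x (n + 1) - x n = β n • (S (x n) - x n) := by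
        rw [hitS n]; module
      rw [hddef]
      rw [e, norm_smul, Real.norm_eq_abs, abs_of_nonneg (hβ0 n).le, norm_sub_rev]
    have h3 : d (n + 1) ≤ ‖x (n + 1) - S (x n)‖ + ‖S (x n) - S (x (n + 1))‖ := by
      have e : x (n + 1) - S (x (n + 1)) = (x (n + 1) - S (x n)) + (S (x n) - S (x (n + 1))) := by
        abel
      calc d (n + 1) = ‖x (n + 1) - S (x (n + 1))‖ := rfl
        _ ≤ _ := by rw [e]; exact norm_add_le _ _
    have h4 : ‖S (x n) - S (x (n + 1))‖ ≤ ‖x n - x (n + 1)‖ :=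
      hSne (x n) (hxC n) (x (n + 1)) (hxC (n + 1))
    have h5 : ‖x n - x (n + 1)‖ = β n * d n := by rw [norm_sub_rev]; exact h2
    have := hd0 n
    nlinarith [h3, h4]
  have hkey : ∀ p' ∈ C, S p' = p' → ∀ n,
      ‖x (n + 1) - p'‖ ^ 2 ≤ ‖x n - p'‖ ^ 2 - β n * (1 - β n) * d n ^ 2 := by
    intro p' hp'C hSp' n
    have h1 : x (n + 1) - p' = (1 - β n) • (x n - p') + β n • (S (x n) - p') := by
      rw [hitS n]; module
    have h2 : ‖x (n + 1) - p'‖ ^ 2 = (1 - β n) * ‖x n - p'‖ ^ 2 + β n * ‖S (x n) - p'‖ ^ 2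
        - β n * (1 - β n) * ‖(x n - p') - (S (x n) - p')‖ ^ 2 := by
      rw [h1, norm_combo_sq']
    have h3 : ‖S (x n) - p'‖ ≤ ‖x n - p'‖ := by
      have := hSne (x n) (hxC n) p' hp'C; rwa [hSp'] at this
    have h4 : (x n - p') - (S (x n) - p') = x n - S (x n) := by abel
    have h5 : ‖S (x n) - p'‖ ^ 2 ≤ ‖x n - p'‖ ^ 2 :=
      pow_le_pow_left₀ (norm_nonneg _) h3 2
    rw [h2, h4]
    have : d n = ‖x n - S (x n)‖ := rfl
    rw [← this]
    nlinarith [mul_le_mul_of_nonneg_left h5 (hβ0 n).le]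
  have hamono : ∀ p' ∈ C, S p' = p' → Antitone fun n => ‖x n - p'‖ ^ 2 := by
    intro p' hp'C hSp'
    apply antitone_nat_of_succ_le
    intro n
    have h1 := hkey p' hp'C hSp' n
    have h2 : 0 ≤ β n * (1 - β n) * d n ^ 2 :=
      mul_nonneg (mul_nonneg (hβ0 n).le (by linarith [hβ1 n])) (sq_nonneg _)
    linarith
  have haconv : ∀ p' ∈ C, S p' = p' →
      ∃ L, Tendsto (fun n => ‖x n - p'‖ ^ 2) atTop (𝓝 L) := by
    intro p' hp'C hSp'
    exact ⟨_, tendsto_atTop_ciInf (hamono p' hp'C hSp')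
      ⟨0, by rintro y ⟨n, rfl⟩; positivity⟩⟩
  have hSp : S p = p := by simp only [hSdef]; rw [hpT]; module
  have hdantitone : Antitone d := antitone_nat_of_succ_le hdmono
  have hdbdd : BddBelow (Set.range d) := ⟨0, by rintro y ⟨n, rfl⟩; exact hd0 n⟩
  have hdlim : Tendsto d atTop (𝓝 (⨅ n, d n)) := tendsto_atTop_ciInf hdantitone hdbdd
  have hinf0 : (⨅ n, d n) = 0 := by
    by_contra hne
    have hδpos : 0 < ⨅ n, d n := lt_of_le_of_ne (le_ciInf hd0) (Ne.symm hne)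
    set δ := ⨅ n, d n with hδdef
    have hdge : ∀ n, δ ≤ d n := fun n => ciInf_le hdbdd n
    have hsum : ∀ N, ∑ n ∈ Finset.range N, β n * (1 - β n) * d n ^ 2 ≤ ‖x 0 - p‖ ^ 2 := by
      intro N
      have tel : ∑ n ∈ Finset.range N, (‖x n - p‖ ^ 2 - ‖x (n + 1) - p‖ ^ 2)
          = ‖x 0 - p‖ ^ 2 - ‖x N - p‖ ^ 2 :=
        Finset.sum_range_sub' (fun n => ‖x n - p‖ ^ 2) N
      have hle : ∑ n ∈ Finset.range N, β n * (1 - β n) * d n ^ 2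
          ≤ ∑ n ∈ Finset.range N, (‖x n - p‖ ^ 2 - ‖x (n + 1) - p‖ ^ 2) :=
        Finset.sum_le_sum fun n _ => by linarith [hkey p hpC hSp n]
      have h0 : (0:ℝ) ≤ ‖x N - p‖ ^ 2 := sq_nonneg _
      rw [tel] at hle
      linarith
    have hβprod : ∀ n, δ ^ 2 * (β n * (1 - β n))
        = δ ^ 2 / (1 - k) ^ 2 * ((α n - k) * (1 - α n)) := by
      intro n; simp only [hβdef]; field_simp; ring
    have hdiv2 : Tendsto (fun N => ∑ n ∈ Finset.range N, δ ^ 2 * (β n * (1 - β n)))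
        atTop atTop := by
      have hc : 0 < δ ^ 2 / (1 - k) ^ 2 := by positivity
      have := hdiv.const_mul_atTop hc
      apply this.congr
      intro N
      rw [Finset.mul_sum]
      exact Finset.sum_congr rfl fun n _ => (hβprod n).symm
    obtain ⟨N, hN⟩ := (hdiv2.eventually_gt_atTop (‖x 0 - p‖ ^ 2)).exists
    have hmono2 : ∑ n ∈ Finset.range N, δ ^ 2 * (β n * (1 - β n))
        ≤ ∑ n ∈ Finset.range N, β n * (1 - β n) * d n ^ 2 := by
      apply Finset.sum_le_sum
      intro n _
      have hββ : 0 ≤ β n * (1 - β n) :=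
        mul_nonneg (hβ0 n).le (by linarith [hβ1 n])
      have hδd : δ ^ 2 ≤ d n ^ 2 := pow_le_pow_left₀ hδpos.le (hdge n) 2
      nlinarith
    linarith [hsum N]
  have hdlim0 : Tendsto d atTop (𝓝 0) := hinf0 ▸ hdlim
  have hxnorm : ∀ n, ‖x n‖ ≤ M := fun n => hMC _ (hxC n)
  set U₀ := Ultrafilter.of (atTop : Filter ℕ) with hU₀def
  have hU₀ : ↑U₀ ≤ (atTop : Filter ℕ) := Ultrafilter.of_le _
  obtain ⟨q, hqC, hSq, hqlim⟩ :=
    weak_ultra_limit' C hCc hC S hSne x hxC M hxnorm hdlim0 U₀ hU₀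
  have hTq : T q = q := by
    have h : k • q + (1 - k) • T q = q := by
      have := hSq; simp only [hSdef] at this; exact this
    have h2 : (1 - k) • T q = q - k • q := eq_sub_of_add_eq' h
    have h3 : q - k • q = (1 - k) • q := by module
    exact smul_right_injective H hkne (h2.trans h3)
  refine ⟨q, hqC, hTq, ?_⟩
  intro w
  rw [tendsto_iff_ultrafilter]
  intro V hV
  obtain ⟨q', hq'C, hSq', hq'lim⟩ :=
    weak_ultra_limit' C hCc hC S hSne x hxC M hxnorm hdlim0 V hV
  have hqq' : q' = q := by
    obtain ⟨L1, hL1⟩ := haconv q hqC hSq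
    obtain ⟨L2, hL2⟩ := haconv q' hq'C hSq'
    have hexp : ∀ n, ⟪x n, q - q'⟫
        = (‖q‖ ^ 2 - ‖q'‖ ^ 2 + ‖x n - q'‖ ^ 2 - ‖x n - q‖ ^ 2) / 2 := by
      intro n
      have e1 := norm_sub_sq_real (x n) q
      have e2 := norm_sub_sq_real (x n) q'
      rw [inner_sub_right]
      linarith
    have ht : Tendsto (fun n => ⟪x n, q - q'⟫) atTop
        (𝓝 ((‖q‖ ^ 2 - ‖q'‖ ^ 2 + L2 - L1) / 2)) := by
      have : Tendsto (fun n => (‖q‖ ^ 2 - ‖q'‖ ^ 2 + ‖x n - q'‖ ^ 2 - ‖x n - q‖ ^ 2) / 2)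
          atTop (𝓝 ((‖q‖ ^ 2 - ‖q'‖ ^ 2 + L2 - L1) / 2)) :=
        (((tendsto_const_nhds.add hL2).sub hL1).div_const 2)
      simpa only [← hexp] using this
    have h1 : ⟪q, q - q'⟫ = (‖q‖ ^ 2 - ‖q'‖ ^ 2 + L2 - L1) / 2 :=
      tendsto_nhds_unique (hqlim _) (ht.mono_left hU₀)
    have h2 : ⟪q', q - q'⟫ = (‖q‖ ^ 2 - ‖q'‖ ^ 2 + L2 - L1) / 2 :=
      tendsto_nhds_unique (hq'lim _) (ht.mono_left hV)
    have h3 : ⟪q - q', q - q'⟫ = 0 := by rw [inner_sub_left, h1, h2]; ring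
    have h4 : q - q' = 0 := by
      have := real_inner_self_eq_norm_sq (q - q')
      rw [h3] at this
      have h5 : ‖q - q'‖ = 0 := by nlinarith [norm_nonneg (q - q')]
      exact norm_eq_zero.mp h5
    rw [sub_eq_zero] at h4
    exact h4.symm
  rw [← hqq']
  exact hq'lim w
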